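/- Let (φ, y, ρ, H) be a solution of the flat FLRW system on I = [t₀, T) (T ≤ ∞) satisfying the Friedmann constraint at every t ∈ I, with ρ(t) ≥ 0 on I. If V(φ(t)) → +∞ as t → T⁻, then H(t) → −∞ as t → T⁻. -/

import Mathlib

open Real Set Filter

/-- A solution of the flat FLRW system on the set `I`:
`φ' = y`, `y' = -3Hy - V'(φ) + α(φ)ρ`, `ρ' = -ρ(3γH + α(φ)y)`, `H' = -(1/2)(y² + γρ)`. -/
def IsFLRWSolution (γ : ℝ) (α V : ℝ → ℝ) (I : Set ℝ) (φ y ρ H : ℝ → ℝ) : Prop :=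
  ∀ t ∈ I,
    HasDerivWithinAt φ (y t) I t ∧
    HasDerivWithinAt y (-3 * H t * y t - deriv V (φ t) + α (φ t) * ρ t) I t ∧
    HasDerivWithinAt ρ (-(ρ t) * (3 * γ * H t + α (φ t) * y t)) I t ∧
    HasDerivWithinAt H (-(1/2) * (y t ^ 2 + γ * ρ t)) I t

/-- The Friedmann constraint `3H² = (1/2)y² + V(φ) + ρ` at time `t`. -/
def FriedmannConstraint (V : ℝ → ℝ) (φ y ρ H : ℝ → ℝ) (t : ℝ) : Prop :=
  3 * H t ^ 2 = (1/2) * y t ^ 2 + V (φ t) + ρ t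

/-- The interval `[t₀, T)` with possibly infinite right endpoint `T : EReal`. -/
def IcoE (t₀ : ℝ) (T : EReal) : Set ℝ := {t : ℝ | t₀ ≤ t ∧ (t : EReal) < T}

/-- The filter of real times `t → T⁻` (this is `𝓝[<] T` for finite `T`, and `atTop`
for `T = ⊤`). -/
noncomputable def leftLimFilter (T : EReal) : Filter ℝ :=
  Filter.comap (fun t : ℝ => (t : EReal)) (nhdsWithin T (Set.Iio T))

/-- The solution `(φ, y, ρ, H)` on `[t₀, T)` extends to a solution of the same system
on the set `J`. -/
def ExtendsSol (γ : ℝ) (α V : ℝ → ℝ) (t₀ : ℝ) (T : EReal)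
    (φ y ρ H : ℝ → ℝ) (J : Set ℝ) : Prop :=
  ∃ φ' y' ρ' H' : ℝ → ℝ,
    IsFLRWSolution γ α V J φ' y' ρ' H' ∧
    Set.EqOn φ φ' (IcoE t₀ T) ∧ Set.EqOn y y' (IcoE t₀ T) ∧
    Set.EqOn ρ ρ' (IcoE t₀ T) ∧ Set.EqOn H H' (IcoE t₀ T)

/-- A solution on `[t₀, T)` is right-maximal if it can be extended neither to a solution
on `[t₀, T]` (when `T` is finite) nor to a solution on `[t₀, T')` for some `T' > T`. -/
def RightMaximal (γ : ℝ) (α V : ℝ → ℝ) (t₀ : ℝ) (T : EReal)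
    (φ y ρ H : ℝ → ℝ) : Prop :=
  ¬ ((T ≠ ⊤ ∧ ExtendsSol γ α V t₀ T φ y ρ H (Set.Icc t₀ T.toReal)) ∨
     (∃ T' : EReal, T < T' ∧ ExtendsSol γ α V t₀ T φ y ρ H (IcoE t₀ T')))

/-- if `V(φ(t)) → +∞` as `t → T⁻` along a solution with `ρ ≥ 0` satisfying
the Friedmann constraint, then `H(t) → -∞` as `t → T⁻`. -/
theorem flrw_H_diverges_of_potential_divergence
    (γ : ℝ) (hγ : 0 < γ)
    (α V : ℝ → ℝ) (hα : Continuous α) (hV : ContDiff ℝ 2 V)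
    (t₀ : ℝ) (T : EReal) (hT : (t₀ : EReal) < T)
    (φ y ρ H : ℝ → ℝ)
    (hsol : IsFLRWSolution γ α V (IcoE t₀ T) φ y ρ H)
    (hcon : ∀ t ∈ IcoE t₀ T, FriedmannConstraint V φ y ρ H t)
    (hρ : ∀ t ∈ IcoE t₀ T, 0 ≤ ρ t)
    (hVφ : Tendsto (fun t => V (φ t)) (leftLimFilter T) atTop) :
    Tendsto H (leftLimFilter T) atBot := by
  -- `IcoE t₀ T` is convex
  have hconv : Convex ℝ (IcoE t₀ T) := by
    rw [convex_iff_ordConnected]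
    constructor
    intro a ha b hb x hx
    exact ⟨ha.1.trans hx.1, lt_of_le_of_lt (EReal.coe_le_coe_iff.2 hx.2) hb.2⟩
  -- H is antitone on `IcoE t₀ T`
  have hanti : AntitoneOn H (IcoE t₀ T) := by
    refine antitoneOn_of_hasDerivWithinAt_nonpos hconv
      (fun t ht => ((hsol t ht).2.2.2).continuousWithinAt)
      (fun t ht => ((hsol t (interior_subset ht)).2.2.2).mono interior_subset)
      (fun t ht => ?_)
    have h1 : 0 ≤ y t ^ 2 + γ * ρ t :=
      add_nonneg (sq_nonneg _) (mul_nonneg hγ.le (hρ t (interior_subset ht)))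
    nlinarith
  -- Eventually `t ∈ IcoE t₀ T` along the filter
  have hmem : ∀ᶠ t in leftLimFilter T, t ∈ IcoE t₀ T := by
    have h1 : Set.Ioi ((t₀ : EReal)) ∈ nhdsWithin T (Set.Iio T) :=
      nhdsWithin_le_nhds (isOpen_Ioi.mem_nhds hT)
    have h2 : Set.Iio T ∈ nhdsWithin T (Set.Iio T) := self_mem_nhdsWithin
    have h3 : (fun t : ℝ => (t : EReal)) ⁻¹' (Set.Ioi (t₀ : EReal) ∩ Set.Iio T) ∈
        leftLimFilter T := Filter.preimage_mem_comap (Filter.inter_mem h1 h2)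
    filter_upwards [h3] with t ht
    exact ⟨le_of_lt (EReal.coe_lt_coe_iff.1 ht.1), ht.2⟩
  have ht₀ : t₀ ∈ IcoE t₀ T := ⟨le_refl _, hT⟩
  rw [tendsto_atBot]
  intro b
  set M : ℝ := max |b| |H t₀| with hM
  have hVlarge : ∀ᶠ t in leftLimFilter T, 3 * M ^ 2 < V (φ t) :=
    hVφ.eventually_gt_atTop _
  filter_upwards [hmem, hVlarge] with t ht hVt
  have hHt : H t ≤ H t₀ := hanti ht₀ ht ht.1
  have hcont := hcon t ht
  unfold FriedmannConstraint at hcont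
  have hρt := hρ t ht
  have hsq : M ^ 2 < H t ^ 2 := by nlinarith [sq_nonneg (y t)]
  have habs : M < |H t| := by
    have h0 : 0 ≤ M := le_trans (abs_nonneg b) (le_max_left _ _)
    nlinarith [abs_nonneg (H t), sq_abs (H t)]
  have hneg : H t < 0 := by
    by_contra h
    push_neg at h
    have : |H t| = H t := abs_of_nonneg h
    have hM2 : |H t₀| ≤ M := le_max_right _ _
    have := le_abs_self (H t₀)
    linarith
  have : |H t| = -H t := abs_of_neg hneg
  have hb : |b| ≤ M := le_max_left _ _
  have := neg_abs_le b
  linarith
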